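/- Let P be a family of N distributions on X × ℝ with a common marginal D_X on X, such that the labeling functions {h_D}_{D∈P} (y = h_D(x)) are orthonormal in L²(D_X). For any feature map φ : X → ℝ^p and any B ≥ 0, if for every D ∈ P there is a predictor in the span of φ with square loss at most 1/2 − γ, then p ≥ 2γN. -/

import Mathlib

open Finset

section Aux

variable {E : Type*} [NormedAddCommGroup E] [InnerProductSpace ℝ E]

/-- Norm squared of the orthogonal projection as a sum of squared inner products
against an orthonormal basis of the subspace. -/
lemma proj_norm_sq_eq_sum {S : Submodule ℝ E} [FiniteDimensional ℝ S]
    (e : OrthonormalBasis (Fin (Module.finrank ℝ S)) ℝ S) (x : E) :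
    ‖(S.orthogonalProjectionOnto x : E)‖ ^ 2
      = ∑ k, (inner ℝ ((e k : E)) x : ℝ) ^ 2 := by
  have hcoeON : Orthonormal ℝ (fun k => (e k : E)) := by
    rw [orthonormal_iff_ite] at *
    intro i j
    have := (orthonormal_iff_ite.mp e.orthonormal) i j
    simpa [Submodule.coe_inner] using this
  have hsum : (S.orthogonalProjectionOnto x : E)
      = ∑ k, (inner ℝ ((e k : E)) x : ℝ) • (e k : E) := by
    have := e.orthogonalProjectionOnto_apply_eq_sum x
    calc (S.orthogonalProjectionOnto x : E)
        = ((∑ k, (inner ℝ ((e k : E)) x : ℝ) • e k : S) : E) := by rw [← this]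
      _ = ∑ k, (inner ℝ ((e k : E)) x : ℝ) • (e k : E) := by
          push_cast; rfl
  rw [hsum, ← real_inner_self_eq_norm_sq,
    hcoeON.inner_sum (fun k => (inner ℝ ((e k : E)) x : ℝ))
      (fun k => (inner ℝ ((e k : E)) x : ℝ)) Finset.univ]
  simp [pow_two]

/-- Key abstract lemma: the sum over an orthonormal family of squared norms of
orthogonal projections onto a subspace is at most the rank of the subspace. -/
lemma sum_proj_norm_sq_le_finrank {ι : Type*} [Fintype ι]
    (S : Submodule ℝ E) [FiniteDimensional ℝ S]
    {H : ι → E} (hH : Orthonormal ℝ H) :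
    ∑ i, ‖(S.orthogonalProjectionOnto (H i) : E)‖ ^ 2 ≤ Module.finrank ℝ S := by
  classical
  have e := stdOrthonormalBasis ℝ S
  have h1 : ∑ i, ‖(S.orthogonalProjectionOnto (H i) : E)‖ ^ 2
      = ∑ k, ∑ i, (inner ℝ (H i) ((e k : E)) : ℝ) ^ 2 := by
    rw [Finset.sum_comm]
    refine Finset.sum_congr rfl fun i _ => ?_
    rw [proj_norm_sq_eq_sum e (H i)]
    exact Finset.sum_congr rfl fun k _ => by rw [real_inner_comm]
  rw [h1]
  calc ∑ k, ∑ i, (inner ℝ (H i) ((e k : E)) : ℝ) ^ 2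
      ≤ ∑ _k : Fin (Module.finrank ℝ S), (1 : ℝ) := by
        refine Finset.sum_le_sum fun k _ => ?_
        have hb := hH.sum_inner_products_le (s := Finset.univ) ((e k : E))
        have hnorm : ‖(e k : E)‖ = 1 := by
          have := e.orthonormal.1 k
          exact this
        calc ∑ i, (inner ℝ (H i) ((e k : E)) : ℝ) ^ 2
            = ∑ i, ‖(inner ℝ (H i) ((e k : E)) : ℝ)‖ ^ 2 := by
              refine Finset.sum_congr rfl fun i _ => ?_
              rw [Real.norm_eq_abs, sq_abs]
          _ ≤ ‖(e k : E)‖ ^ 2 := hb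
          _ = 1 := by rw [hnorm]; norm_num
    _ = Module.finrank ℝ S := by simp

end Aux

/-- Abstract dimensional-complexity lower bound (Theorem C.1(i) of Kamath et al.):
if a `p`-dimensional feature map achieves square-loss edge `γ` on each of `N`
orthonormal labeling functions (over a common marginal), then `p ≥ 2γN`. -/
theorem stmt7 {X : Type*} [Fintype X] {ι : Type*} [Fintype ι] [DecidableEq ι] {p : ℕ}
    (μ : X → ℝ) (hμ0 : ∀ x, 0 ≤ μ x) (hμ1 : ∑ x, μ x = 1)
    (h : ι → X → ℝ)
    (horth : ∀ i j, (∑ x, μ x * (h i x * h j x)) = if i = j then (1:ℝ) else 0)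
    (φ : X → EuclideanSpace ℝ (Fin p)) (γ : ℝ) (B : ℝ) (hB : 0 ≤ B)
    (hlearn : ∀ i, ∃ w : EuclideanSpace ℝ (Fin p),
      ∑ x, μ x * ((inner ℝ w (φ x) : ℝ) - h i x) ^ 2 / 2 ≤ 1/2 - γ) :
    2 * γ * Fintype.card ι ≤ p := by
  classical
  -- weighted versions of the labeling functions and features
  let H : ι → EuclideanSpace ℝ X := fun i => WithLp.toLp 2 (fun x => Real.sqrt (μ x) * h i x)
  let Φ : Fin p → EuclideanSpace ℝ X := fun k => WithLp.toLp 2 (fun x => Real.sqrt (μ x) * φ x k)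
  have hsq : ∀ x, Real.sqrt (μ x) * Real.sqrt (μ x) = μ x := fun x =>
    Real.mul_self_sqrt (hμ0 x)
  -- H is orthonormal
  have hHON : Orthonormal ℝ H := by
    rw [orthonormal_iff_ite]
    intro i j
    have : (inner ℝ (H i) (H j) : ℝ) = ∑ x, μ x * (h i x * h j x) := by
      simp only [H, PiLp.inner_apply, RCLike.inner_apply, conj_trivial]
      refine Finset.sum_congr rfl fun x _ => ?_
      conv_rhs => rw [← hsq x]
      ring
    rw [this, horth i j]
  set S : Submodule ℝ (EuclideanSpace ℝ X) := Submodule.span ℝ (Set.range Φ) with hSdef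
  have hrank : Module.finrank ℝ S ≤ p := by
    have := finrank_range_le_card (R := ℝ) Φ
    simpa [Set.finrank, Fintype.card_fin] using this
  -- per-target lower bound on the projection norm
  have key : ∀ i, 2 * γ ≤ ‖(S.orthogonalProjectionOnto (H i) : EuclideanSpace ℝ X)‖ ^ 2 := by
    intro i
    obtain ⟨w, hw⟩ := hlearn i
    let F : EuclideanSpace ℝ X := WithLp.toLp 2 (fun x => Real.sqrt (μ x) * (inner ℝ w (φ x) : ℝ))
    have hFS : F ∈ S := by
      have hF : F = ∑ k, w k • Φ k := by
        refine (WithLp.ext_iff 2).mpr (funext fun x => ?_)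
        have hap : (∑ k, w k • Φ k) x = ∑ k, w k * Φ k x := by
          induction (Finset.univ : Finset (Fin p)) using Finset.induction with
          | empty => simp
          | insert _ _ hk ih => rw [Finset.sum_insert hk, Finset.sum_insert hk, ← ih]; rfl
        rw [hap]
        simp only [F, Φ, PiLp.inner_apply, RCLike.inner_apply, conj_trivial,
          Finset.mul_sum, PiLp.toLp_apply]
        exact Finset.sum_congr rfl fun k _ => by ring
      rw [hF]
      exact Submodule.sum_mem _ fun k _ =>
        Submodule.smul_mem _ _ (Submodule.subset_span ⟨k, rfl⟩)
    -- loss bound in norm form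
    have hloss : ‖H i - F‖ ^ 2 ≤ 1 - 2 * γ := by
      have hnorm : ‖H i - F‖ ^ 2 = ∑ x, μ x * ((inner ℝ w (φ x) : ℝ) - h i x) ^ 2 := by
        have hinner : ∀ v : EuclideanSpace ℝ X, (inner ℝ v v : ℝ) = ∑ x, (v x) ^ 2 := by
          intro v
          simp only [PiLp.inner_apply, RCLike.inner_apply, conj_trivial, pow_two]
        rw [← real_inner_self_eq_norm_sq, hinner]
        refine Finset.sum_congr rfl fun x _ => ?_
        have hx : (H i - F) x = Real.sqrt (μ x) * h i x
            - Real.sqrt (μ x) * (inner ℝ w (φ x) : ℝ) := by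
          simp [H, F, PiLp.sub_apply]
        rw [hx]
        conv_rhs => rw [← hsq x]
        ring
      rw [hnorm]
      have h2 : ∑ x, μ x * ((inner ℝ w (φ x) : ℝ) - h i x) ^ 2 / 2 =
          (∑ x, μ x * ((inner ℝ w (φ x) : ℝ) - h i x) ^ 2) / 2 := by
        rw [Finset.sum_div]
      rw [h2] at hw
      linarith
    set Pv : EuclideanSpace ℝ X := (S.orthogonalProjectionOnto (H i) : EuclideanSpace ℝ X)
      with hPv
    have hPvS : Pv ∈ S := (S.orthogonalProjectionOnto (H i)).2
    have hperp : H i - Pv ∈ Sᗮ := Submodule.sub_starProjection_mem_orthogonal (K := S) (H i)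
    -- Pythagoras: ‖H i‖² = ‖Pv‖² + ‖H i - Pv‖²
    have hpyth1 : ‖H i‖ ^ 2 = ‖Pv‖ ^ 2 + ‖H i - Pv‖ ^ 2 := by
      have hiz : (inner ℝ Pv (H i - Pv) : ℝ) = 0 := hperp Pv hPvS
      have hthis := norm_add_sq_real Pv (H i - Pv)
      rw [hiz] at hthis
      have : Pv + (H i - Pv) = H i := by abel
      rw [this] at hthis
      linarith
    -- ‖H i - Pv‖² ≤ ‖H i - F‖²
    have hpyth2 : ‖H i - Pv‖ ^ 2 ≤ ‖H i - F‖ ^ 2 := by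
      have hiz : (inner ℝ (Pv - F) (H i - Pv) : ℝ) = 0 :=
        hperp _ (Submodule.sub_mem _ hPvS hFS)
      have hthis := norm_add_sq_real (Pv - F) (H i - Pv)
      rw [hiz] at hthis
      have hd : (Pv - F) + (H i - Pv) = H i - F := by abel
      rw [hd] at hthis
      nlinarith [sq_nonneg ‖Pv - F‖]
    have hHnorm : ‖H i‖ = 1 := hHON.1 i
    rw [hHnorm] at hpyth1
    have hfin : ‖H i - Pv‖ ^ 2 ≤ 1 - 2 * γ := le_trans hpyth2 hloss
    nlinarith [hpyth1]
  -- the dimension bound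
  have hsum : ∑ _i : ι, (2 * γ)
      ≤ ∑ i, ‖(S.orthogonalProjectionOnto (H i) : EuclideanSpace ℝ X)‖ ^ 2 :=
    Finset.sum_le_sum fun i _ => key i
  have hbessel := sum_proj_norm_sq_le_finrank S hHON
  have hmain : (Fintype.card ι : ℝ) * (2 * γ) ≤ (Module.finrank ℝ S : ℝ) := by
    calc (Fintype.card ι : ℝ) * (2 * γ) = ∑ _i : ι, (2 * γ) := by
          rw [Finset.sum_const]; simp [mul_comm]
      _ ≤ _ := le_trans hsum hbessel
  have hcast : (Module.finrank ℝ S : ℝ) ≤ (p : ℝ) := by exact_mod_cast hrank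
  nlinarith [hmain, hcast]
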